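/- arXiv:2406.03346 — 2 statements merged into one kernel-verified Lean document; each statement's English description precedes it below -/
import Mathlib

section
/- Let Z_1, ..., Z_{N+1} be exchangeable real-valued random variables such that ties occur with probability zero (i.e., P(Z_i = Z_j) = 0 for i ≠ j). Let Q be the ⌈(1-α)(N+1)⌉-th smallest element of {Z_1, ..., Z_N}, assuming ⌈(1-α)(N+1)⌉ ≤ N. Then P(Z_{N+1} ≤ Q) = ⌈(1-α)(N+1)⌉ / (N+1). -/
open MeasureTheory ProbabilityTheory
open scoped ENNReal

/-- The k-th smallest element (1-indexed) of a finite tuple of reals. -/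
noncomputable def kthSmallest {N : ℕ} (v : Fin N → ℝ) (k : ℕ) : ℝ :=
  (List.insertionSort (· ≤ ·) (List.ofFn v)).getD (k - 1) 0

lemma sorted_le_getD_iff (l : List ℝ) (hl : l.Pairwise (· ≤ ·)) (m : ℕ) (hm : m < l.length) (x : ℝ) :
    x ≤ l.getD m 0 ↔ l.countP (fun y => decide (y < x)) ≤ m := by
  rw [List.getD_eq_getElem l 0 hm]
  have hsplit : ∀ t : ℕ, l.countP (fun y => decide (y < x)) =
      (l.take t).countP (fun y => decide (y < x)) + (l.drop t).countP (fun y => decide (y < x)) := by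
    intro t
    conv_lhs => rw [← List.take_append_drop t l]
    rw [List.countP_append]
  have hmono : ∀ i j (hi : i < l.length) (hj : j < l.length), i ≤ j → l[i] ≤ l[j] := by
    intro i j hi hj hij
    exact hl.rel_get_of_le (a := ⟨i, hi⟩) (b := ⟨j, hj⟩) hij
  constructor
  · intro hx
    rw [hsplit m]
    have h1 : (l.take m).countP (fun y => decide (y < x)) ≤ m :=
      le_trans List.countP_le_length (by simp)
    have h2 : (l.drop m).countP (fun y => decide (y < x)) = 0 := by
      rw [List.countP_eq_zero]
      intro a ha
      simp only [decide_eq_true_eq, not_lt]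
      rw [List.mem_drop_iff_getElem] at ha
      obtain ⟨i, hi, rfl⟩ := ha
      exact le_trans hx (hmono m (m+i) hm (by omega) (by omega))
    omega
  · intro hc
    by_contra hx
    push_neg at hx
    have hfull : (l.take (m+1)).countP (fun y => decide (y < x)) = m+1 := by
      have : (l.take (m+1)).countP (fun y => decide (y < x)) = (l.take (m+1)).length := by
        rw [List.countP_eq_length]
        intro a ha
        rw [List.mem_take_iff_getElem] at ha
        obtain ⟨i, hi, rfl⟩ := ha
        simp only [decide_eq_true_eq]
        exact lt_of_le_of_lt (hmono i m (by omega) hm (by omega)) hx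
      rw [this, List.length_take]
      omega
    have := hsplit (m+1)
    omega

lemma countP_ofFn_lt {N : ℕ} (v : Fin N → ℝ) (x : ℝ) :
    (List.ofFn v).countP (fun y => decide (y < x)) = (Finset.univ.filter (fun i => v i < x)).card := by
  classical
  rw [List.ofFn_eq_map, List.countP_map]
  have : Finset.univ.filter (fun i => v i < x) = ⟨Multiset.filter (fun i => v i < x) (List.finRange N), by
    exact Multiset.Nodup.filter _ (List.nodup_finRange N)⟩ := rfl
  rw [this]
  simp [Finset.card, List.countP_eq_length_filter]
  rfl

lemma rank_char {N : ℕ} (v : Fin (N+1) → ℝ) (hv : Function.Injective v) (k : ℕ)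
    (hk1 : 1 ≤ k) (hkN : k ≤ N) :
    (v (Fin.last N) ≤ kthSmallest (fun i : Fin N => v i.castSucc) k ↔
      (Finset.univ.filter (fun i => v i ≤ v (Fin.last N))).card ≤ k) := by
  classical
  set x := v (Fin.last N) with hx
  set w : Fin N → ℝ := fun i => v i.castSucc with hw
  set l := List.insertionSort (· ≤ ·) (List.ofFn w) with hl
  have hlen : l.length = N := by rw [hl, List.length_insertionSort, List.length_ofFn]
  have hsorted : l.Pairwise (· ≤ ·) := List.pairwise_insertionSort _ _
  have hm : k - 1 < l.length := by omega
  have h1 : x ≤ kthSmallest w k ↔ l.countP (fun y => decide (y < x)) ≤ k - 1 :=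
    sorted_le_getD_iff l hsorted (k-1) hm x
  have h2 : l.countP (fun y => decide (y < x)) = (Finset.univ.filter (fun i => w i < x)).card := by
    rw [(List.perm_insertionSort _ _).countP_eq, countP_ofFn_lt]
  have hset : Finset.univ.filter (fun i : Fin (N+1) => v i ≤ x)
      = insert (Fin.last N) ((Finset.univ.filter (fun i : Fin N => w i < x)).image Fin.castSucc) := by
    ext i
    simp only [Finset.mem_insert, Finset.mem_filter, Finset.mem_image, Finset.mem_univ, true_and]
    constructor
    · intro hi
      rcases Fin.eq_castSucc_or_eq_last i with ⟨j, rfl⟩ | rfl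
      · exact Or.inr ⟨j, lt_of_le_of_ne hi (fun h => absurd (hv h) (Fin.castSucc_lt_last j).ne), rfl⟩
      · exact Or.inl rfl
    · rintro (rfl | ⟨j, hj, rfl⟩)
      · exact le_refl _
      · exact le_of_lt hj
  have hcard : (Finset.univ.filter (fun i : Fin (N+1) => v i ≤ x)).card
      = (Finset.univ.filter (fun i : Fin N => w i < x)).card + 1 := by
    rw [hset, Finset.card_insert_of_notMem, Finset.card_image_of_injective _ (Fin.castSucc_injective N)]
    simp only [Finset.mem_image]
    rintro ⟨j, hj, hjl⟩
    exact absurd hjl (Fin.castSucc_lt_last j).ne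
  rw [h1, h2]
  omega

lemma rank_strict_mono {N : ℕ} (v : Fin (N+1) → ℝ) {j j' : Fin (N+1)} (h : v j < v j') :
    (Finset.univ.filter (fun i => v i ≤ v j)).card
      < (Finset.univ.filter (fun i => v i ≤ v j')).card := by
  classical
  apply Finset.card_lt_card
  rw [Finset.ssubset_iff_of_subset]
  · exact ⟨j', by simp, by simp [not_le.2 h]⟩
  · intro i hi
    simp only [Finset.mem_filter, Finset.mem_univ, true_and] at hi ⊢
    exact hi.trans h.le

lemma rank_inj {N : ℕ} (v : Fin (N+1) → ℝ) (hv : Function.Injective v) :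
    Function.Injective (fun j => (Finset.univ.filter (fun i => v i ≤ v j)).card) := by
  intro j j' h
  by_contra hne
  have hvne : v j ≠ v j' := fun he => hne (hv he)
  rcases lt_or_gt_of_ne hvne with hlt | hlt
  · exact absurd h (rank_strict_mono v hlt).ne
  · exact absurd h.symm (rank_strict_mono v hlt).ne

lemma rank_surj {N : ℕ} (v : Fin (N+1) → ℝ) (hv : Function.Injective v) :
    ∀ k ∈ Finset.Icc 1 (N+1), ∃ j, (Finset.univ.filter (fun i => v i ≤ v j)).card = k := by
  classical
  set f : Fin (N+1) → ℕ := fun j => (Finset.univ.filter (fun i => v i ≤ v j)).card with hf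
  have hsub : Finset.univ.image f ⊆ Finset.Icc 1 (N+1) := by
    intro k hk
    simp only [Finset.mem_image, Finset.mem_univ, true_and] at hk
    obtain ⟨j, rfl⟩ := hk
    simp only [Finset.mem_Icc]
    constructor
    · exact Finset.card_pos.2 ⟨j, by simp⟩
    · exact le_trans (Finset.card_filter_le _ _) (by simp)
  have hcards : (Finset.univ.image f).card = (Finset.Icc 1 (N+1)).card := by
    rw [Finset.card_image_of_injective _ (rank_inj v hv)]
    simp [Nat.card_Icc]
  have heq : Finset.univ.image f = Finset.Icc 1 (N+1) :=
    Finset.eq_of_subset_of_card_le hsub (le_of_eq hcards.symm)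
  intro k hk
  rw [← heq] at hk
  simp only [Finset.mem_image, Finset.mem_univ, true_and] at hk
  exact hk

theorem stmt0 {Ω : Type*} [MeasurableSpace Ω] (P : Measure Ω) [IsProbabilityMeasure P]
    (N : ℕ) (Z : Fin (N + 1) → Ω → ℝ) (hZ : ∀ i, Measurable (Z i))
    (hexch : ∀ σ : Equiv.Perm (Fin (N + 1)),
      P.map (fun ω => fun i => Z (σ i) ω) = P.map (fun ω => fun i => Z i ω))
    (hties : ∀ i j, i ≠ j → P {ω | Z i ω = Z j ω} = 0)
    (α : ℝ) (hα : α ∈ Set.Ioo (0 : ℝ) 1)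
    (hn : ⌈(1 - α) * (N + 1)⌉₊ ≤ N) :
    P {ω | Z (Fin.last N) ω ≤
        kthSmallest (fun i : Fin N => Z i.castSucc ω) ⌈(1 - α) * (N + 1)⌉₊}
      = (⌈(1 - α) * (N + 1)⌉₊ : ℝ≥0∞) / (N + 1) := by
  classical
  set n := ⌈(1 - α) * (N + 1)⌉₊ with hndef
  have hn1 : 1 ≤ n := by
    rw [hndef, Nat.one_le_ceil_iff]
    have h1 : (0:ℝ) < 1 - α := by linarith [hα.2]
    positivity
  -- rank function
  set c : Fin (N+1) → Ω → ℕ :=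
    fun j ω => (Finset.univ.filter (fun i => Z i ω ≤ Z j ω)).card with hcdef
  have hcmeas : ∀ j, Measurable (c j) := by
    intro j
    have : c j = fun ω => ∑ i : Fin (N+1), if Z i ω ≤ Z j ω then 1 else 0 := by
      funext ω; rw [hcdef]; exact Finset.card_filter _ _
    rw [this]
    exact Finset.measurable_sum _ fun i _ =>
      Measurable.ite (measurableSet_le (hZ i) (hZ j)) measurable_const measurable_const
  have hCmeas : ∀ (j : Fin (N+1)) (k : ℕ), MeasurableSet {ω | c j ω = k} :=
    fun j k => (hcmeas j) (measurableSet_singleton k)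
  -- the no-ties event
  set D : Set Ω := {ω | Function.Injective fun i => Z i ω} with hDdef
  have hDc : P Dᶜ = 0 := by
    have hsub : Dᶜ ⊆ ⋃ (i) (j) (_ : i ≠ j), {ω | Z i ω = Z j ω} := by
      intro ω hω
      simp only [Set.mem_compl_iff, hDdef, Set.mem_setOf_eq] at hω
      rw [Function.not_injective_iff] at hω
      obtain ⟨i, j, hij, hne⟩ := hω
      exact Set.mem_iUnion.2 ⟨i, Set.mem_iUnion.2 ⟨j, Set.mem_iUnion.2 ⟨hne, hij⟩⟩⟩
    refine measure_mono_null hsub ?_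
    rw [measure_iUnion_null_iff]; intro i
    rw [measure_iUnion_null_iff]; intro j
    rw [measure_iUnion_null_iff]; intro hij
    exact hties i j hij
  have hDmeas : MeasurableSet D := by
    have hD : D = (⋃ (i) (j) (_ : i ≠ j), {ω | Z i ω = Z j ω})ᶜ := by
      ext ω
      simp only [Set.mem_compl_iff, Set.mem_iUnion, Set.mem_setOf_eq, hDdef, not_exists]
      constructor
      · intro h i j hij heq
        exact hij (h heq)
      · intro h a b hab
        by_contra hne
        exact h a b hne hab
    rw [hD]
    exact (MeasurableSet.iUnion fun i => MeasurableSet.iUnion fun j =>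
      MeasurableSet.iUnion fun _ => measurableSet_eq_fun (hZ i) (hZ j)).compl
  have hD1 : P D = 1 := by
    have := measure_inter_conull (μ := P) (s := Set.univ) (t := D) hDc
    rw [Set.univ_inter] at this
    rw [this, measure_univ]
  -- exchangeability: every rank event has the same probability as for the last index
  have hmapZ : Measurable fun ω => fun i => Z i ω := measurable_pi_lambda _ hZ
  set g : (Fin (N+1) → ℝ) → ℕ :=
    fun u => (Finset.univ.filter (fun i => u i ≤ u (Fin.last N))).card with hgdef
  have hgmeas : Measurable g := by
    have : g = fun u => ∑ i : Fin (N+1), if u i ≤ u (Fin.last N) then 1 else 0 := by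
      funext u; rw [hgdef]; exact Finset.card_filter _ _
    rw [this]
    exact Finset.measurable_sum _ fun i _ =>
      Measurable.ite (measurableSet_le (measurable_pi_apply i) (measurable_pi_apply _))
        measurable_const measurable_const
  have key : ∀ (j : Fin (N+1)) (k : ℕ), P {ω | c j ω = k} = P {ω | c (Fin.last N) ω = k} := by
    intro j k
    set σ : Equiv.Perm (Fin (N+1)) := Equiv.swap (Fin.last N) j with hσdef
    have hσlast : σ (Fin.last N) = j := Equiv.swap_apply_left _ _
    have h1 : {ω | c j ω = k} = (fun ω => fun i => Z (σ i) ω) ⁻¹' (g ⁻¹' {k}) := by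
      ext ω
      simp only [Set.mem_setOf_eq, Set.mem_preimage, Set.mem_singleton_iff]
      have hgv : g (fun i => Z (σ i) ω) = c j ω := by
        rw [hgdef, hcdef]
        simp only [hσlast]
        apply Finset.card_bij (fun i _ => σ i)
        · intro a ha
          simp only [Finset.mem_filter, Finset.mem_univ, true_and] at ha ⊢
          exact ha
        · intro a _ b _ hab
          exact σ.injective hab
        · intro b hb
          refine ⟨σ.symm b, ?_, by simp⟩
          simp only [Finset.mem_filter, Finset.mem_univ, true_and] at hb ⊢
          simpa using hb
      rw [hgv]
    have h2 : {ω | c (Fin.last N) ω = k} = (fun ω => fun i => Z i ω) ⁻¹' (g ⁻¹' {k}) := by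
      ext ω
      simp only [Set.mem_setOf_eq, Set.mem_preimage, Set.mem_singleton_iff]
      exact Iff.rfl
    rw [h1, h2,
      ← Measure.map_apply (measurable_pi_lambda _ fun i => hZ (σ i)) (hgmeas (measurableSet_singleton k)),
      ← Measure.map_apply hmapZ (hgmeas (measurableSet_singleton k)), hexch σ]
  -- each rank value in [1, N+1] has probability 1/(N+1)
  have hone : ∀ k ∈ Finset.Icc 1 (N+1), P {ω | c (Fin.last N) ω = k} = ((N:ℝ≥0∞)+1)⁻¹ := by
    intro k hk
    set E : Fin (N+1) → Set Ω := fun j => {ω | c j ω = k} ∩ D with hEdef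
    have hEmeas : ∀ j, MeasurableSet (E j) := fun j => (hCmeas j k).inter hDmeas
    have hdisj : (↑(Finset.univ : Finset (Fin (N+1))) : Set (Fin (N+1))).PairwiseDisjoint E := by
      intro j _ j' _ hjj'
      refine Set.disjoint_left.2 fun ω hω hω' => hjj' ?_
      obtain ⟨hj, hD⟩ := hω
      obtain ⟨hj', _⟩ := hω'
      exact rank_inj _ hD (hj.trans hj'.symm)
    have hcover : ⋃ j ∈ (Finset.univ : Finset (Fin (N+1))), E j = D := by
      ext ω
      simp only [Set.mem_iUnion, Finset.mem_univ, Set.mem_inter_iff, Set.mem_setOf_eq,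
        exists_prop, true_and, hEdef]
      constructor
      · rintro ⟨j, _, hω⟩
        exact hω
      · intro hω
        obtain ⟨j, hj⟩ := rank_surj _ hω k hk
        exact ⟨j, hj, hω⟩
    have hsum : ∑ j : Fin (N+1), P (E j) = 1 := by
      rw [← measure_biUnion_finset hdisj fun j _ => hEmeas j, hcover, hD1]
    have hEj : ∀ j, P (E j) = P {ω | c (Fin.last N) ω = k} := by
      intro j
      rw [hEdef]
      simp only
      rw [measure_inter_conull hDc, key j k]
    rw [Finset.sum_congr rfl fun j _ => hEj j, Finset.sum_const, Finset.card_univ,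
      Fintype.card_fin, nsmul_eq_mul] at hsum
    have hne0 : ((N:ℝ≥0∞)+1) ≠ 0 := by simp
    have hnetop : ((N:ℝ≥0∞)+1) ≠ ⊤ := by simp
    have := (ENNReal.eq_div_iff hne0 hnetop).2 (by push_cast at hsum; exact hsum)
    rw [this, one_div]
  -- rewrite the target event
  set A : Set Ω := {ω | Z (Fin.last N) ω ≤
      kthSmallest (fun i : Fin N => Z i.castSucc ω) n} with hAdef
  have hAD : A ∩ D = (⋃ k ∈ Finset.Icc 1 n, {ω | c (Fin.last N) ω = k}) ∩ D := by
    ext ω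
    simp only [Set.mem_inter_iff, Set.mem_iUnion, Set.mem_setOf_eq, hAdef, exists_prop]
    constructor
    · rintro ⟨hA, hD⟩
      refine ⟨⟨c (Fin.last N) ω, ?_, rfl⟩, hD⟩
      rw [Finset.mem_Icc]
      refine ⟨Finset.card_pos.2 ⟨Fin.last N, by simp⟩, ?_⟩
      exact (rank_char (fun i => Z i ω) hD n hn1 hn).1 hA
    · rintro ⟨⟨k, hk, hck⟩, hD⟩
      rw [Finset.mem_Icc] at hk
      refine ⟨(rank_char (fun i => Z i ω) hD n hn1 hn).2 ?_, hD⟩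
      simp only [hcdef] at hck
      omega
  have hstep : P A = P (⋃ k ∈ Finset.Icc 1 n, {ω | c (Fin.last N) ω = k}) := by
    rw [← measure_inter_conull (s := A) hDc, hAD, measure_inter_conull hDc]
  rw [hstep]
  have hdisjk : (↑(Finset.Icc 1 n) : Set ℕ).PairwiseDisjoint
      (fun k => {ω | c (Fin.last N) ω = k}) := by
    intro k _ k' _ hkk'
    exact Set.disjoint_left.2 fun ω hω hω' => hkk' (hω.symm.trans hω')
  rw [measure_biUnion_finset hdisjk fun k _ => hCmeas _ k]
  have hsubIcc : Finset.Icc 1 n ⊆ Finset.Icc 1 (N+1) := Finset.Icc_subset_Icc_right (by omega)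
  rw [Finset.sum_congr rfl fun k hk => hone k (hsubIcc hk), Finset.sum_const, Nat.card_Icc,
    nsmul_eq_mul]
  rw [ENNReal.div_eq_inv_mul]
  push_cast
  ring_nf
end

section
/- Let Z_1, ..., Z_{N+1} be i.i.d. real-valued random variables with ties occurring with probability zero, and let Q be the ⌈(1-α)(N+1)⌉-th smallest element of {Z_1,...,Z_N} with ⌈(1-α)(N+1)⌉ ≤ N. Then (1-α) ≤ P(Z_{N+1} ≤ Q) ≤ (1-α) + 1/(N+1). -/
open MeasureTheory ProbabilityTheory
open scoped ENNReal

section aux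

/-- In a sorted list, entry i is < t iff i < count of entries < t. -/
lemma sorted_get_lt_iff : ∀ (s : List ℝ), s.Pairwise (· ≤ ·) → ∀ (t : ℝ) (i : ℕ) (h : i < s.length),
    (s.get ⟨i, h⟩ < t ↔ i < s.countP (fun a => decide (a < t))) := by
  intro s
  induction s with
  | nil => intro _ t i h; simp at h
  | cons a tl ih =>
    intro hs t i h
    rcases List.pairwise_cons.mp hs with ⟨ha, htl⟩
    by_cases hat : a < t
    · cases i with
      | zero => simp [List.countP_cons, hat]
      | succ n =>
        have h2 := ih htl t n (by simpa using h)
        have : (a :: tl).get ⟨n+1, h⟩ = tl.get ⟨n, by simpa using h⟩ := rfl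
        rw [this, List.countP_cons, h2]
        simp [hat]
    · have h0 : tl.countP (fun a => decide (a < t)) = 0 := by
        rw [List.countP_eq_zero]
        intro b hb
        simp only [decide_eq_true_eq]
        exact not_lt.mpr (le_trans (not_lt.mp hat) (ha b hb))
      have hc : (a :: tl).countP (fun a => decide (a < t)) = 0 := by
        simp [List.countP_cons, hat, h0]
      rw [hc]
      simp only [Nat.not_lt_zero, iff_false, not_lt]
      cases i with
      | zero => exact not_lt.mp hat
      | succ n =>
        have : (a :: tl).get ⟨n+1, h⟩ = tl.get ⟨n, by simpa using h⟩ := rfl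
        rw [this]
        exact le_trans (not_lt.mp hat) (ha _ (by apply List.get_mem))

/-- count over ofFn equals Finset filter card -/
lemma countP_ofFn {N : ℕ} (v : Fin N → ℝ) (t : ℝ) :
    (List.ofFn v).countP (fun a => decide (a < t)) =
      (Finset.univ.filter fun j => v j < t).card := by
  rw [List.ofFn_eq_map, List.countP_map, Fin.univ_def]
  simp [Finset.filter, Finset.card, Multiset.filter_coe, List.countP_eq_length_filter,
    Function.comp_def]

lemma le_kthSmallest_iff {N : ℕ} (v : Fin N → ℝ) (t : ℝ) (k : ℕ) (hk1 : 1 ≤ k) (hkN : k ≤ N) :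
    t ≤ kthSmallest v k ↔ (Finset.univ.filter fun j => v j < t).card < k := by
  unfold kthSmallest
  set s := List.insertionSort (· ≤ ·) (List.ofFn v) with hs
  have hlen : s.length = N := by simp [hs]
  have hsort : s.Pairwise (· ≤ ·) := List.pairwise_insertionSort _ _
  have hcount : s.countP (fun a => decide (a < t)) =
      (Finset.univ.filter fun j => v j < t).card := by
    rw [(List.perm_insertionSort (· ≤ ·) (List.ofFn v)).countP_eq]
    exact countP_ofFn v t
  have hlt : k - 1 < s.length := by omega
  rw [show s.getD (k-1) 0 = s.get ⟨k-1, hlt⟩ from List.getD_eq_get _ _ ⟨k-1, hlt⟩]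
  rw [← not_lt, sorted_get_lt_iff s hsort t (k-1) hlt, hcount, not_lt]
  omega

noncomputable def rnk {n : ℕ} (x : Fin n → ℝ) (i : Fin n) : ℕ :=
  (Finset.univ.filter fun j => x j < x i).card

lemma rnk_comp_perm {n : ℕ} (x : Fin n → ℝ) (σ : Equiv.Perm (Fin n)) (i : Fin n) :
    rnk (x ∘ σ) i = rnk x (σ i) := by
  unfold rnk
  apply Finset.card_bij' (fun j _ => σ j) (fun j _ => σ.symm j) <;>
    simp [Function.comp]

lemma rnk_lt {n : ℕ} (x : Fin n → ℝ) (i : Fin n) : rnk x i < n := by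
  have h : (Finset.univ.filter fun j => x j < x i) ⊆ Finset.univ.erase i := by
    intro j hj
    simp only [Finset.mem_filter] at hj
    refine Finset.mem_erase.mpr ⟨?_, Finset.mem_univ _⟩
    rintro rfl; exact lt_irrefl _ hj.2
  calc rnk x i ≤ (Finset.univ.erase i).card := Finset.card_le_card h
    _ < Finset.univ.card := Finset.card_erase_lt_of_mem (Finset.mem_univ i)
    _ = n := Finset.card_fin n

lemma rnk_injective {n : ℕ} {x : Fin n → ℝ} (hx : Function.Injective x) :
    Function.Injective (rnk x) := by
  have key : ∀ i j : Fin n, x i < x j → rnk x i < rnk x j := by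
    intro i j hij
    apply Finset.card_lt_card
    constructor
    · intro l hl
      simp only [Finset.mem_filter, Finset.mem_univ, true_and] at hl ⊢
      exact hl.trans hij
    · intro hsub
      have : i ∈ Finset.univ.filter fun l => x l < x j := by
        simp [hij]
      have := hsub this
      simp at this
  intro i j hij
  by_contra hne
  rcases lt_or_gt_of_ne (fun h : x i = x j => hne (hx h)) with h | h
  · exact absurd hij (Nat.ne_of_lt (key _ _ h))
  · exact absurd hij.symm (Nat.ne_of_lt (key _ _ h))

lemma card_rnk_lt {n : ℕ} {x : Fin n → ℝ} (hx : Function.Injective x) {k : ℕ} (hk : k < n) :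
    (Finset.univ.filter fun i => rnk x i < k).card = k := by
  set f : Fin n → Fin n := fun i => ⟨rnk x i, rnk_lt x i⟩ with hf
  have hfinj : Function.Injective f := by
    intro i j h
    exact rnk_injective hx (congrArg Fin.val h)
  have hfbij : Function.Bijective f := (Finite.injective_iff_bijective).mp hfinj
  have h1 : (Finset.univ.filter fun i => rnk x i < k) =
      (Finset.univ.filter fun m : Fin n => (m : ℕ) < k).preimage f
        (hfinj.injOn) := by
    ext i; simp [hf]
  rw [h1, Finset.card_preimage _ _ ]
  have hrange : ∀ m : Fin n, m ∈ Set.range f := fun m => hfbij.surjective m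
  have : {x ∈ (Finset.univ.filter fun m : Fin n => (m : ℕ) < k) | x ∈ Set.range f}
      = (Finset.univ.filter fun m : Fin n => (m : ℕ) < k) := by
    ext m; simpa using fun _ => hfbij.surjective m
  rw [this]
  have h2 : (Finset.univ.filter fun m : Fin n => (m : ℕ) < k) = Finset.Iio ⟨k, hk⟩ := by
    ext m; simp [Fin.lt_def]
  rw [h2, Fin.card_Iio]

lemma rnk_measurable {n : ℕ} (i : Fin n) : Measurable fun x : Fin n → ℝ => rnk x i := by
  have : (fun x : Fin n → ℝ => rnk x i)
      = fun x => ∑ j : Fin n, if x j < x i then 1 else 0 := by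
    funext x; unfold rnk; rw [Finset.card_filter]
  rw [this]
  exact Finset.measurable_sum _ fun j _ =>
    Measurable.ite (measurableSet_lt (measurable_pi_apply j) (measurable_pi_apply i))
      measurable_const measurable_const

lemma rnk_last_eq {N : ℕ} (x : Fin (N + 1) → ℝ) :
    rnk x (Fin.last N) =
      (Finset.univ.filter fun j : Fin N => x j.castSucc < x (Fin.last N)).card := by
  unfold rnk
  symm
  refine Finset.card_bij' (fun (j : Fin N) _ => j.castSucc)
      (fun (j : Fin (N+1)) hj => j.castPred (by
        rintro rfl
        simp only [Finset.mem_filter] at hj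
        exact lt_irrefl _ hj.2)) ?_ ?_ ?_ ?_
  · intro a ha
    simp only [Finset.mem_filter, Finset.mem_univ, true_and] at ha ⊢
    exact ha
  · intro a ha
    simp only [Finset.mem_filter, Finset.mem_univ, true_and] at ha ⊢
    simpa using ha
  · intro a ha; simp
  · intro a ha; simp
end aux

theorem stmt1 {Ω : Type*} [MeasurableSpace Ω] (P : Measure Ω) [IsProbabilityMeasure P]
    (N : ℕ) (Z : Fin (N + 1) → Ω → ℝ) (hZ : ∀ i, Measurable (Z i))
    (hindep : iIndepFun Z P)
    (hident : ∀ i, P.map (Z i) = P.map (Z 0))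
    (hties : ∀ i j, i ≠ j → P {ω | Z i ω = Z j ω} = 0)
    (α : ℝ) (hα : α ∈ Set.Ioo (0 : ℝ) 1)
    (hn : ⌈(1 - α) * (N + 1)⌉₊ ≤ N) :
    ENNReal.ofReal (1 - α) ≤
        P {ω | Z (Fin.last N) ω ≤
          kthSmallest (fun i : Fin N => Z i.castSucc ω) ⌈(1 - α) * (N + 1)⌉₊} ∧
      P {ω | Z (Fin.last N) ω ≤
          kthSmallest (fun i : Fin N => Z i.castSucc ω) ⌈(1 - α) * (N + 1)⌉₊}
        ≤ ENNReal.ofReal (1 - α) + 1 / (N + 1) := by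
  obtain ⟨hα0, hα1⟩ := hα
  set k : ℕ := ⌈(1 - α) * (N + 1)⌉₊ with hkdef
  have hpos : (0:ℝ) < (1 - α) * (N + 1) := by nlinarith [Nat.cast_nonneg (α := ℝ) N]
  have hk1 : 1 ≤ k := Nat.one_le_iff_ne_zero.mpr (by
    simp only [hkdef, ne_eq, Nat.ceil_eq_zero, not_le]; exact hpos)
  -- the coordinate map
  set φ : Ω → (Fin (N+1) → ℝ) := fun ω i => Z i ω with hφdef
  have hφ : Measurable φ := measurable_pi_lambda _ hZ
  set μ : Measure ℝ := P.map (Z 0) with hμdef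
  haveI : IsProbabilityMeasure μ := Measure.isProbabilityMeasure_map (hZ 0).aemeasurable
  set π : Measure (Fin (N+1) → ℝ) := Measure.pi (fun _ => μ) with hπdef
  haveI : IsProbabilityMeasure π := by rw [hπdef]; infer_instance
  -- Step 1: law of φ is the product measure
  have hmap : P.map φ = π := by
    rw [hπdef]
    refine (Measure.pi_eq fun s hs => ?_).symm
    rw [Measure.map_apply hφ (MeasurableSet.univ_pi hs)]
    have hpre : φ ⁻¹' (Set.univ.pi s) = ⋂ i, Z i ⁻¹' s i := by
      ext ω; simp [hφdef, Set.mem_pi]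
    rw [hpre, hindep.meas_iInter (fun i => ⟨s i, hs i, rfl⟩)]
    refine Finset.prod_congr rfl fun i _ => ?_
    rw [← Measure.map_apply (hZ i) (hs i), hident i]
  -- events
  set E : Fin (N+1) → Set (Fin (N+1) → ℝ) := fun i => {x | rnk x i < k} with hEdef
  have hEm : ∀ i, MeasurableSet (E i) := by
    intro i
    exact (rnk_measurable i) (measurableSet_Iio (a := k))
  -- Step 2: the original event is φ ⁻¹' (E last)
  have hev : {ω | Z (Fin.last N) ω ≤
      kthSmallest (fun i : Fin N => Z i.castSucc ω) k} = φ ⁻¹' (E (Fin.last N)) := by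
    ext ω
    simp only [Set.mem_setOf_eq, Set.mem_preimage, hEdef, Set.mem_setOf_eq]
    rw [le_kthSmallest_iff _ _ k hk1 hn, rnk_last_eq]
  -- Step 3: permutation symmetry
  have hsymm : ∀ i : Fin (N+1), π (E i) = π (E (Fin.last N)) := by
    intro i
    have hmp : MeasurePreserving (fun x : Fin (N+1) → ℝ => x ∘ (Equiv.swap i (Fin.last N))) π π := by
      set σ := Equiv.swap i (Fin.last N)
      have h := measurePreserving_piCongrLeft (fun _ : Fin (N+1) => μ) σ.symm
      have he : ⇑(MeasurableEquiv.piCongrLeft (fun _ : Fin (N+1) => ℝ) σ.symm)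
          = fun x : Fin (N+1) → ℝ => x ∘ σ := by
        funext x
        funext l
        have h2 := Equiv.piCongrLeft_apply_apply (fun _ : Fin (N+1) => ℝ) σ.symm x (σ l)
        simp only [Equiv.symm_apply_apply] at h2
        simpa [MeasurableEquiv.coe_piCongrLeft] using h2
      rw [he] at h
      exact h
    have := hmp.measure_preimage (hEm i).nullMeasurableSet
    have hpre : (fun x : Fin (N+1) → ℝ => x ∘ (Equiv.swap i (Fin.last N))) ⁻¹' (E i)
        = E (Fin.last N) := by
      ext x
      simp only [Set.mem_preimage, hEdef, Set.mem_setOf_eq]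
      rw [rnk_comp_perm x (Equiv.swap i (Fin.last N)) i, Equiv.swap_apply_left]
    rw [hpre] at this
    exact this.symm
  -- Step 4: ties are null under π
  set T : Set (Fin (N+1) → ℝ) := ⋃ (i : Fin (N+1)) (j : Fin (N+1)) (_ : i ≠ j),
      {x | x i = x j} with hTdef
  have hTm : MeasurableSet T := by
    refine MeasurableSet.iUnion fun i => MeasurableSet.iUnion fun j => MeasurableSet.iUnion fun _ => ?_
    exact measurableSet_eq_fun (measurable_pi_apply i) (measurable_pi_apply j)
  have hT0 : π T = 0 := by
    rw [hTdef]
    refine measure_iUnion_null fun i => measure_iUnion_null fun j => measure_iUnion_null fun hij => ?_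
    have hm : MeasurableSet {x : Fin (N+1) → ℝ | x i = x j} :=
      measurableSet_eq_fun (measurable_pi_apply i) (measurable_pi_apply j)
    rw [← hmap, Measure.map_apply hφ hm]
    have : φ ⁻¹' {x | x i = x j} = {ω | Z i ω = Z j ω} := rfl
    rw [this]; exact hties i j hij
  have hinj : ∀ x ∉ T, Function.Injective x := by
    intro x hx a b hab
    by_contra hne
    exact hx (Set.mem_iUnion.mpr ⟨a, Set.mem_iUnion.mpr ⟨b, Set.mem_iUnion.mpr ⟨hne, hab⟩⟩⟩)
  -- Step 5: ∑ i, π (E i) = k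
  have hTc : (Tᶜ : Set (Fin (N+1) → ℝ)) =ᵐ[π] (Set.univ : Set (Fin (N+1) → ℝ)) := by
    refine MeasureTheory.ae_eq_univ.mpr ?_
    rw [compl_compl]
    exact hT0
  have hsum : ∑ i : Fin (N+1), π (E i) = k := by
    have key : ∀ i, π (E i) = π (E i ∩ Tᶜ) := by
      intro i
      refine (measure_congr ?_).symm
      have h := Filter.EventuallyEq.inter (Filter.EventuallyEq.refl (ae π) (E i)) hTc
      simpa using h
    rw [Finset.sum_congr rfl fun i _ => key i]
    have hind : ∀ i, π (E i ∩ Tᶜ) =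
        ∫⁻ x, (E i ∩ Tᶜ).indicator (fun _ => (1:ℝ≥0∞)) x ∂π := by
      intro i
      exact (lintegral_indicator_one ((hEm i).inter hTm.compl)).symm
    rw [Finset.sum_congr rfl fun i _ => hind i]
    rw [← lintegral_finset_sum _ (fun i _ =>
      (measurable_const.indicator ((hEm i).inter hTm.compl)))]
    have hpt : ∀ x, (∑ i : Fin (N+1), (E i ∩ Tᶜ).indicator (fun _ => (1:ℝ≥0∞)) x)
        = Tᶜ.indicator (fun _ => (k:ℝ≥0∞)) x := by
      intro x
      by_cases hx : x ∈ Tᶜ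
      · rw [Set.indicator_of_mem hx]
        have hxe : ∀ i, (E i ∩ Tᶜ).indicator (fun _ => (1:ℝ≥0∞)) x
            = if rnk x i < k then 1 else 0 := by
          intro i
          by_cases hxi : x ∈ E i
          · rw [Set.indicator_of_mem (Set.mem_inter hxi hx),
              if_pos (show rnk x i < k from hxi)]
          · rw [Set.indicator_of_notMem (fun h => hxi h.1),
              if_neg (show ¬ rnk x i < k from hxi)]
        rw [Finset.sum_congr rfl fun i _ => hxe i, Finset.sum_boole]
        have := card_rnk_lt (x := x) (hinj x hx) (k := k) (Nat.lt_succ_of_le hn)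
        rw [this]
      · rw [Set.indicator_of_notMem hx]
        refine Finset.sum_eq_zero fun i _ => ?_
        exact Set.indicator_of_notMem (fun h => hx h.2) _
    rw [lintegral_congr hpt, lintegral_indicator_const hTm.compl]
    have : π Tᶜ = 1 := by
      rw [prob_compl_eq_one_sub hTm, hT0, tsub_zero]
    rw [this, mul_one]
  -- Step 6: π (E last) = k / (N+1)
  have hlast : π (E (Fin.last N)) = k / (N+1) := by
    have h1 : ∑ i : Fin (N+1), π (E i) = (N+1) * π (E (Fin.last N)) := by
      rw [Finset.sum_congr rfl fun i _ => hsymm i, Finset.sum_const, Finset.card_univ,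
        Fintype.card_fin, nsmul_eq_mul]
      push_cast
      ring
    have hne : ((N:ℝ≥0∞)+1) ≠ 0 := by intro h; simp at h
    have hnt : ((N:ℝ≥0∞)+1) ≠ ⊤ := by simp
    have h2 : ((N:ℝ≥0∞)+1) * π (E (Fin.last N)) = k := by rw [← h1, hsum]
    exact (ENNReal.eq_div_iff hne hnt).mpr h2
  -- Step 7: conclude
  have hP : P {ω | Z (Fin.last N) ω ≤
      kthSmallest (fun i : Fin N => Z i.castSucc ω) k} = k / (N+1) := by
    rw [hev, ← Measure.map_apply hφ (hEm _), hmap, hlast]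
  rw [hP]
  have hN1 : (0:ℝ) < (N:ℝ) + 1 := by positivity
  have hkle : (1 - α) * ((N:ℝ) + 1) ≤ (k:ℝ) := by
    have := Nat.le_ceil ((1 - α) * ((N:ℝ) + 1))
    rw [← hkdef] at this
    exact this
  have hkup : (k:ℝ) ≤ (1 - α) * ((N:ℝ) + 1) + 1 := by
    have := Nat.ceil_lt_add_one (le_of_lt hpos)
    rw [← hkdef] at this
    exact le_of_lt this
  have hdiv : (k : ℝ≥0∞) / ((N:ℝ≥0∞) + 1) = ENNReal.ofReal ((k:ℝ) / ((N:ℝ) + 1)) := by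
    rw [ENNReal.ofReal_div_of_pos hN1]
    congr 1
    · exact (ENNReal.ofReal_natCast k).symm
    · rw [ENNReal.ofReal_add (by positivity) zero_le_one, ENNReal.ofReal_natCast,
        ENNReal.ofReal_one]
  have hone : (1 : ℝ≥0∞) / ((N:ℝ≥0∞) + 1) = ENNReal.ofReal ((1:ℝ) / ((N:ℝ) + 1)) := by
    rw [ENNReal.ofReal_div_of_pos hN1, ENNReal.ofReal_one]
    congr 1
    rw [ENNReal.ofReal_add (by positivity) zero_le_one, ENNReal.ofReal_natCast,
      ENNReal.ofReal_one]
  constructor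
  · rw [hdiv]
    apply ENNReal.ofReal_le_ofReal
    rw [le_div_iff₀ hN1]
    exact hkle
  · rw [hdiv, hone, ← ENNReal.ofReal_add (by nlinarith) (by positivity)]
    apply ENNReal.ofReal_le_ofReal
    rw [div_le_iff₀ hN1]
    have hcc : (1/((N:ℝ)+1)) * ((N:ℝ)+1) = 1 := by field_simp
    nlinarith [hcc]
end
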